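/- arXiv:2310.12885 — 3 statements merged into one kernel-verified Lean document; each statement's English description precedes it below -/
import Mathlib

section
/- Suppose each T_i : [0, t_f] → ℝ is C¹, T_i(0) > 0, and for each i, dT_i/dt ≥ c_i(t)(T_⋆(t) − T_i(t)) where c_i is continuous nonnegative and T_⋆(t) = min_k T_k(t). Then T_i(t) ≥ min_k T_k(0) for all t ∈ [0, t_f] and all i. -/
open Finset Set
open Topology Filter

theorem temperature_lower_bound (N : ℕ) [NeZero N] (tf : ℝ) (htf : 0 < tf)
    (T T' c : Fin N → ℝ → ℝ)
    (hderiv : ∀ i, ∀ t ∈ Icc (0 : ℝ) tf, HasDerivAt (T i) (T' i t) t)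
    (hT'cont : ∀ i, ContinuousOn (T' i) (Icc 0 tf))
    (hccont : ∀ i, ContinuousOn (c i) (Icc 0 tf))
    (hcpos : ∀ i, ∀ t ∈ Icc (0 : ℝ) tf, 0 ≤ c i t)
    (hT0 : ∀ i, 0 < T i 0)
    (Tstar : ℝ → ℝ)
    (hTstar : ∀ t, Tstar t = Finset.univ.inf' Finset.univ_nonempty (fun k => T k t))
    (hineq : ∀ i, ∀ t ∈ Icc (0 : ℝ) tf, c i t * Tstar t ≤ T' i t + c i t * T i t) :
    ∀ i, ∀ t ∈ Icc (0 : ℝ) tf,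
      Finset.univ.inf' Finset.univ_nonempty (fun k => T k 0) ≤ T i t := by
  set m : ℝ := Finset.univ.inf' Finset.univ_nonempty (fun k => T k 0) with hm
  -- continuity of each `T i` on `Icc 0 tf`
  have hTcont : ∀ i, ContinuousOn (T i) (Icc 0 tf) := fun i x hx =>
    ((hderiv i x hx).continuousAt).continuousWithinAt
  -- continuity of `Tstar` on `Icc 0 tf`
  have hTstarCont : ContinuousOn Tstar (Icc 0 tf) := by
    have : ContinuousOn
        (fun t => Finset.univ.inf' Finset.univ_nonempty (fun k => T k t)) (Icc 0 tf) :=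
      ContinuousOn.finset_inf'_apply Finset.univ_nonempty (fun i _ => hTcont i)
    exact this.congr (fun t _ => hTstar t)
  -- `Tstar t ≤ T i t`
  have hTstar_le : ∀ i t, Tstar t ≤ T i t := fun i t => by
    rw [hTstar t]; exact Finset.inf'_le _ (Finset.mem_univ i)
  -- key estimate: for every ε > 0, `m - ε * (1 + t) ≤ Tstar t` on `Icc 0 tf`
  have key : ∀ ε > (0 : ℝ), ∀ t ∈ Icc (0 : ℝ) tf, m - ε * (1 + t) ≤ Tstar t := by
    intro ε hε t ht
    have main : ∀ ⦃x⦄, x ∈ Icc (0 : ℝ) tf → (fun s => -Tstar s) x ≤ ε * (1 + x) - m := by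
      refine image_le_of_liminf_slope_right_lt_deriv_boundary
        (f' := fun _ => (0 : ℝ)) (B' := fun _ => ε)
        hTstarCont.neg ?_ ?_ ?_ ?_
      · -- liminf of right slopes of `-Tstar` is ≤ 0
        intro x hx r hr
        have hr' : (0:ℝ) < r := hr
        have hxI : x ∈ Icc (0 : ℝ) tf := Ico_subset_Icc_self hx
        set A : Finset (Fin N) := Finset.univ.filter (fun k => T k x = Tstar x) with hA
        -- on active indices the slopes of `-T k` are eventually `< r`
        have hev1 : ∀ᶠ z in 𝓝[>] x, ∀ k ∈ A, slope (fun s => -T k s) x z < r := by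
          rw [Filter.eventually_all_finset]
          intro k hk
          have hkx : T k x = Tstar x := (Finset.mem_filter.1 hk).2
          have hT'pos : 0 ≤ T' k x := by
            have := hineq k x hxI
            rw [← hkx] at this
            linarith
          have hslope : Filter.Tendsto (slope (fun s => -T k s) x) (𝓝[≠] x)
              (𝓝 (-(T' k x))) := hasDerivAt_iff_tendsto_slope.1 (hderiv k x hxI).neg
          have hev : ∀ᶠ z in 𝓝[≠] x, slope (fun s => -T k s) x z < r :=
            hslope (Iio_mem_nhds (lt_of_le_of_lt (by linarith : -(T' k x) ≤ 0) hr'))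
          exact hev.filter_mono (nhdsWithin_mono x fun z hz => ne_of_gt hz)
        -- nonactive indices eventually stay strictly above the minimum
        have hF : 𝓝[>] x ≤ 𝓝[Icc (0:ℝ) tf] x :=
          nhdsWithin_le_of_mem (Filter.mem_of_superset
            (Ioc_mem_nhdsGT_of_mem ⟨le_rfl, hx.2⟩)
            (fun z hz => ⟨le_trans hx.1 hz.1.le, hz.2⟩))
        have hTs : Filter.Tendsto Tstar (𝓝[>] x) (𝓝 (Tstar x)) :=
          (hTstarCont x hxI).mono_left hF
        have hev2 : ∀ᶠ z in 𝓝[>] x, ∀ k, k ∉ A → Tstar z < T k z := by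
          rw [Filter.eventually_all]
          intro k
          by_cases hk : k ∈ A
          · exact Filter.Eventually.of_forall fun z h => absurd hk h
          · have hne : T k x ≠ Tstar x := by
              intro h; exact hk (Finset.mem_filter.2 ⟨Finset.mem_univ k, h⟩)
            have hlt : Tstar x < T k x := lt_of_le_of_ne (hTstar_le k x) (Ne.symm hne)
            have hTk : Filter.Tendsto (T k) (𝓝[>] x) (𝓝 (T k x)) :=
              (hderiv k x hxI).continuousAt.tendsto.mono_left nhdsWithin_le_nhds
            have hsub : Filter.Tendsto (fun z => T k z - Tstar z) (𝓝[>] x)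
                (𝓝 (T k x - Tstar x)) := hTk.sub hTs
            have := hsub (Ioi_mem_nhds (by linarith : (0:ℝ) < T k x - Tstar x))
            filter_upwards [this] with z hz _
            have : (0:ℝ) < T k z - Tstar z := hz
            linarith
        have hev'' : ∀ᶠ z in 𝓝[>] x, slope (fun s => -Tstar s) x z < r := by
          filter_upwards [hev1, hev2, self_mem_nhdsWithin] with z h1 h2 hzx
          obtain ⟨j, -, hj⟩ := Finset.exists_mem_eq_inf' (Finset.univ_nonempty (α := Fin N))
            (fun k => T k z)
          have hjz : Tstar z = T j z := by rw [hTstar z, hj]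
          have hjA : j ∈ A := by
            by_contra h
            exact absurd hjz (ne_of_lt (h2 j h))
          have hjx : T j x = Tstar x := (Finset.mem_filter.1 hjA).2
          have heq : slope (fun s => -Tstar s) x z = slope (fun s => -T j s) x z := by
            simp [slope_def_field, hjz, hjx]
          rw [heq]
          exact h1 j hjA
        exact hev''.frequently
      · -- initial condition
        have h0 : Tstar 0 = m := by rw [hTstar 0, hm]
        simp only [Pi.neg_apply, h0]
        nlinarith
      · -- barrier has derivative ε
        intro x
        have : HasDerivAt (fun s => ε * (1 + s) - m) (ε * (0 + 1) - 0) x := by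
          exact ((hasDerivAt_const x (1:ℝ)).add (hasDerivAt_id x)).const_mul ε |>.sub
            (hasDerivAt_const x m)
        simpa using this
      · -- strict inequality at contact points
        intro x _ _
        exact hε
    have := main ht
    simp only at this
    linarith
  intro i t ht
  have hT : Tstar t ≤ T i t := hTstar_le i t
  have : m ≤ Tstar t := by
    by_contra h
    push_neg at h
    have h1t : 0 < 1 + t := by have := ht.1; linarith
    have hε : 0 < (m - Tstar t) / (2 * (1 + t)) := div_pos (by linarith) (by linarith)
    have := key _ hε t ht
    rw [div_mul_eq_mul_div, mul_comm] at this
    have : m - (1 + t) * ((m - Tstar t) / (2 * (1 + t))) ≤ Tstar t := by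
      have := key _ hε t ht
      nlinarith [key _ hε t ht]
    have hcalc : (1 + t) * ((m - Tstar t) / (2 * (1 + t))) = (m - Tstar t) / 2 := by
      field_simp
    rw [hcalc] at this
    linarith
  linarith
end

section
/- Suppose each u_i : [0, t_f] → ℝ is C¹ and satisfies u_i'(t) = Σ_j λ_{ij}(t)(ū_{ij}(t) − u_i(t)) where λ_{ij}(t) ≥ 0 is continuous and ū_{ij}(t) is a convex combination of u_i(t) and u_j(t). Then min_j u_j(0) ≤ u_i(t) ≤ max_j u_j(0) for all t ∈ [0,t_f] and all i. -/
open Finset Set Filter Topology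

/-- Maximum principle for cooperative linear systems u_i' = Σ_j c_ij (u_j - u_i), c ≥ 0. -/
theorem coop_upper_bound (N : ℕ) [NeZero N] (tf : ℝ)
    (u u' : Fin N → ℝ → ℝ) (c : Fin N → Fin N → ℝ → ℝ)
    (hc : ∀ i j, ∀ t ∈ Icc (0 : ℝ) tf, 0 ≤ c i j t)
    (hderiv : ∀ i, ∀ t ∈ Icc (0 : ℝ) tf, HasDerivAt (u i) (u' i t) t)
    (hode : ∀ i, ∀ t ∈ Icc (0 : ℝ) tf, u' i t = ∑ j, c i j t * (u j t - u i t))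
    (M : ℝ) (hM : ∀ i, u i 0 ≤ M) :
    ∀ i, ∀ t ∈ Icc (0 : ℝ) tf, u i t ≤ M := by
  -- ε-relaxed bound
  have key : ∀ ε > (0:ℝ), ∀ i, ∀ t ∈ Icc (0:ℝ) tf, u i t ≤ M + ε * (1 + t) := by
    intro ε hε
    set bound : ℝ → ℝ := fun t => M + ε * (1 + t) with hbound
    by_contra hbad
    push_neg at hbad
    obtain ⟨i₀, t₀', ht₀', hlt⟩ := hbad
    set B : Set ℝ := {t | t ∈ Icc (0:ℝ) tf ∧ ∃ i, bound t < u i t} with hB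
    have hBne : B.Nonempty := ⟨t₀', ht₀', i₀, hlt⟩
    have hBbdd : BddBelow B := ⟨0, fun x hx => hx.1.1⟩
    set t0 : ℝ := sInf B with ht0def
    have ht0mem : t0 ∈ Icc (0:ℝ) tf := by
      obtain ⟨b, hb⟩ := id hBne
      exact ⟨le_csInf hBne fun x hx => hx.1.1, (csInf_le hBbdd hb).trans hb.1.2⟩
    have hgood : ∀ s ∈ Ico (0:ℝ) t0, ∀ i, u i s ≤ bound s := by
      intro s hs i
      by_contra h
      push_neg at h
      have : s ∈ B := ⟨⟨hs.1, hs.2.le.trans ht0mem.2⟩, i, h⟩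
      exact absurd (csInf_le hBbdd this) (not_le.mpr hs.2)
    -- at t0, all ≤ bound
    have hcont : ∀ i, ContinuousAt (u i) t0 := fun i => (hderiv i t0 ht0mem).continuousAt
    have hat : ∀ i, u i t0 ≤ bound t0 := by
      intro i
      rcases eq_or_lt_of_le ht0mem.1 with h0 | h0
      · have : u i t0 = u i 0 := by rw [← h0]
        rw [this]
        have : (0:ℝ) < ε * (1 + t0) := by
          apply mul_pos hε; nlinarith [ht0mem.1]
        calc u i 0 ≤ M := hM i
          _ ≤ bound t0 := by simp only [hbound]; linarith
      · -- limit from the left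
        haveI hne : (𝓝[Ico (0:ℝ) t0] t0).NeBot := by
          apply mem_closure_iff_nhdsWithin_neBot.mp
          rw [closure_Ico h0.ne]
          exact ⟨ht0mem.1, le_refl t0⟩
        have h1 : Tendsto (u i) (𝓝[Ico (0:ℝ) t0] t0) (𝓝 (u i t0)) :=
          (hcont i).continuousWithinAt
        have h2 : Tendsto bound (𝓝[Ico (0:ℝ) t0] t0) (𝓝 (bound t0)) :=
          ((continuous_const.add (continuous_const.mul
            (continuous_const.add continuous_id)))).continuousWithinAt
        exact le_of_tendsto_of_tendsto h1 h2
          (eventually_nhdsWithin_of_forall fun s hs => hgood s hs i)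
    have ht0notB : t0 ∉ B := by
      rintro ⟨_, i, hi⟩
      exact absurd (hat i) (not_le.mpr hi)
    have ht0lt : t0 < tf := by
      rcases eq_or_lt_of_le ht0mem.2 with h | h
      · exfalso
        obtain ⟨b, hb⟩ := hBne
        have hbt0 : t0 ≤ b := csInf_le hBbdd hb
        have : b = t0 := le_antisymm (hb.1.2.trans_eq h.symm) hbt0
        exact ht0notB (this ▸ hb)
      · exact h
    -- each i: eventually (in 𝓝[>] t0) u i s ≤ bound s
    have hev : ∀ i, ∀ᶠ s in 𝓝[>] t0, u i s ≤ bound s := by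
      intro i
      rcases eq_or_lt_of_le (hat i) with heq | hlt'
      · -- equality case: derivative strictly negative
        have hle0 : u' i t0 ≤ 0 := by
          rw [hode i t0 ht0mem]
          apply Finset.sum_nonpos
          intro j _
          apply mul_nonpos_of_nonneg_of_nonpos (hc i j t0 ht0mem)
          have := hat j
          rw [← heq] at this
          linarith
        set f : ℝ → ℝ := fun s => u i s - bound s with hf
        have hfd : HasDerivAt f (u' i t0 - ε) t0 := by
          have hb : HasDerivAt bound ε t0 := by
            have : HasDerivAt (fun s : ℝ => M + ε * (1 + s)) (ε * 1) t0 := by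
              apply HasDerivAt.const_add
              exact (hasDerivAt_id t0).const_add (1:ℝ) |>.const_mul ε
            simpa only [mul_one] using this
          exact (hderiv i t0 ht0mem).sub hb
        have hft0 : f t0 = 0 := by simp [hf, heq]
        have hslope : Tendsto (slope f t0) (𝓝[≠] t0) (𝓝 (u' i t0 - ε)) :=
          hasDerivAt_iff_tendsto_slope.mp hfd
        have hneg : ∀ᶠ s in 𝓝[≠] t0, slope f t0 s < 0 := by
          apply hslope.eventually_lt_const
          linarith
        have : ∀ᶠ s in 𝓝[>] t0, slope f t0 s < 0 :=
          hneg.filter_mono (nhdsWithin_mono t0 fun s hs => ne_of_gt hs)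
        filter_upwards [this, self_mem_nhdsWithin] with s hs hs'
        have hspos : (0:ℝ) < s - t0 := sub_pos.mpr hs'
        rw [slope_def_field, hft0] at hs
        have hnum : f s - 0 < 0 := by
          by_contra hge
          push_neg at hge
          exact absurd hs (not_lt.mpr (div_nonneg (by linarith) hspos.le))
        have hfs : u i s - bound s < 0 := by simpa [hf] using hnum
        linarith
      · -- strict case: continuity
        have hco : ContinuousAt (fun s => u i s - bound s) t0 :=
          (hcont i).sub ((continuous_const.add (continuous_const.mul
            (continuous_const.add continuous_id)))).continuousAt
        have : ∀ᶠ s in 𝓝 t0, u i s - bound s < 0 :=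
          hco.eventually_lt_const (by simpa using sub_neg.mpr hlt')
        exact (this.filter_mono nhdsWithin_le_nhds).mono fun s hs => by linarith
    have hall : ∀ᶠ s in 𝓝[>] t0, ∀ i, u i s ≤ bound s := eventually_all.mpr hev
    have htflt : ∀ᶠ s in 𝓝[>] t0, s < tf := by
      apply eventually_nhdsWithin_of_eventually_nhds
      exact Filter.Tendsto.eventually_lt_const ht0lt tendsto_id
    obtain ⟨δ, hδpos, hδ⟩ := (mem_nhdsGT_iff_exists_Ioo_subset).mp
      (hall.and htflt)
    -- find a bad point in (t0, t0+δ)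
    have : ∃ b ∈ B, b < δ := by
      apply (csInf_lt_iff hBbdd hBne).mp
      exact hδpos
    obtain ⟨b, hbB, hbδ⟩ := this
    have hbt0 : t0 < b := lt_of_le_of_ne (csInf_le hBbdd hbB) (fun h => ht0notB (h ▸ hbB))
    have := hδ ⟨hbt0, hbδ⟩
    obtain ⟨_, i, hi⟩ := hbB
    exact absurd (this.1 i) (not_le.mpr hi)
  -- let ε → 0
  intro i t ht
  have ht1 : (0:ℝ) < 1 + t := by linarith [ht.1]
  apply le_of_forall_pos_le_add
  intro ε hε
  have := key (ε / (1 + t)) (div_pos hε ht1) i t ht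
  calc u i t ≤ M + ε / (1 + t) * (1 + t) := this
    _ = M + ε := by field_simp

theorem velocity_envelope_bounds (N : ℕ) [NeZero N] (tf : ℝ) (htf : 0 < tf)
    (u u' : Fin N → ℝ → ℝ)
    (lam alpha : Fin N → Fin N → ℝ → ℝ)
    (hlamcont : ∀ i j, ContinuousOn (lam i j) (Icc 0 tf))
    (hlampos : ∀ i j, ∀ t ∈ Icc (0 : ℝ) tf, 0 ≤ lam i j t)
    (halpha : ∀ i j, ∀ t ∈ Icc (0 : ℝ) tf, 0 ≤ alpha i j t ∧ alpha i j t ≤ 1)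
    (halphasum : ∀ i j, ∀ t ∈ Icc (0 : ℝ) tf, alpha i j t + alpha j i t = 1)
    (hderiv : ∀ i, ∀ t ∈ Icc (0 : ℝ) tf, HasDerivAt (u i) (u' i t) t)
    (hode : ∀ i, ∀ t ∈ Icc (0 : ℝ) tf,
      u' i t = ∑ j, lam i j t * ((alpha i j t * u i t + alpha j i t * u j t) - u i t)) :
    ∀ i, ∀ t ∈ Icc (0 : ℝ) tf,
      Finset.univ.inf' Finset.univ_nonempty (fun k => u k 0) ≤ u i t ∧
      u i t ≤ Finset.univ.sup' Finset.univ_nonempty (fun k => u k 0) := by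
  set c : Fin N → Fin N → ℝ → ℝ := fun i j t => lam i j t * alpha j i t with hcdef
  have hc : ∀ i j, ∀ t ∈ Icc (0:ℝ) tf, 0 ≤ c i j t := fun i j t ht =>
    mul_nonneg (hlampos i j t ht) (halpha j i t ht).1
  have hode' : ∀ i, ∀ t ∈ Icc (0:ℝ) tf, u' i t = ∑ j, c i j t * (u j t - u i t) := by
    intro i t ht
    rw [hode i t ht]
    apply Finset.sum_congr rfl
    intro j _
    have hs := halphasum i j t ht
    simp only [hcdef]
    ring_nf
    linear_combination (lam i j t * u i t) * hs
  have hupper := coop_upper_bound N tf u u' c hc hderiv hode'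
    (Finset.univ.sup' Finset.univ_nonempty (fun k => u k 0))
    (fun i => Finset.le_sup' (fun k => u k 0) (Finset.mem_univ i))
  have hlower := coop_upper_bound N tf (fun i s => -(u i s)) (fun i s => -(u' i s)) c hc
    (fun i t ht => (hderiv i t ht).neg)
    (by
      intro i t ht
      rw [hode' i t ht, ← Finset.sum_neg_distrib]
      apply Finset.sum_congr rfl
      intro j _
      ring)
    (-(Finset.univ.inf' Finset.univ_nonempty (fun k => u k 0)))
    (fun i => neg_le_neg (Finset.inf'_le (fun k => u k 0) (Finset.mem_univ i)))
  intro i t ht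
  have hl := hlower i t ht
  exact ⟨by linarith, hupper i t ht⟩
end

section
/- Under the homogeneous multi-species BGK moment dynamics, the species temperatures satisfy dT_i/dt = (1/ε)Σ_j λ_{ij}β_{ji}(T_j − T_i) + (1/(εd))Σ_j λ_{ij} m_i α_{ji}(α_{ji} + β_{ij})|u_i − u_j|², where α_{ij} = ρ_iλ_{ij}/(ρ_iλ_{ij}+ρ_jλ_{ji}) and β_{ij} = n_iλ_{ij}/(n_iλ_{ij}+n_jλ_{ji}). -/
open Finset

theorem temperature_ode (N d : ℕ) (hN : 1 ≤ N) (hd : 1 ≤ d) (ε : ℝ) (hε : 0 < ε)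
    (m n ρ : Fin N → ℝ) (hm : ∀ i, 0 < m i) (hn : ∀ i, 0 < n i)
    (hρ : ∀ i, ρ i = m i * n i)
    (lam : ℝ → Fin N → Fin N → ℝ) (hlam : ∀ t i j, 0 < lam t i j)
    (alpha beta : ℝ → Fin N → Fin N → ℝ)
    (halpha : ∀ t i j, alpha t i j = ρ i * lam t i j / (ρ i * lam t i j + ρ j * lam t j i))
    (hbeta : ∀ t i j, beta t i j = n i * lam t i j / (n i * lam t i j + n j * lam t j i))
    (u : Fin N → ℝ → EuclideanSpace ℝ (Fin d))
    (u' : Fin N → ℝ → EuclideanSpace ℝ (Fin d))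
    (E T : Fin N → ℝ → ℝ)
    (hu : ∀ i t, HasDerivAt (u i) (u' i t) t)
    (hmom : ∀ i t, ρ i • u' i t =
      (1 / ε) • ∑ j, (ρ i * lam t i j * alpha t j i) • (u j t - u i t))
    (hT : ∀ i t, E i t = (1 / 2) * ρ i * ‖u i t‖ ^ 2 + (d / 2) * n i * T i t)
    (umix : Fin N → Fin N → ℝ → EuclideanSpace ℝ (Fin d))
    (humix : ∀ i j t, umix i j t = alpha t i j • u i t + alpha t j i • u j t)
    (Tmix : Fin N → Fin N → ℝ → ℝ)
    (hTmix : ∀ i j t, Tmix i j t = beta t i j * T i t + beta t j i * T j t +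
      (1 / d) * m i * alpha t j i * beta t i j * ‖u i t - u j t‖ ^ 2)
    (hE : ∀ i t, HasDerivAt (E i)
      ((1 / ε) * ∑ j, lam t i j *
        ((1 / 2) * ρ i * ‖umix i j t‖ ^ 2 + (d / 2) * n i * Tmix i j t - E i t)) t) :
    ∀ i t, HasDerivAt (T i)
      ((1 / ε) * (∑ j, lam t i j * beta t j i * (T j t - T i t)) +
        (1 / (ε * d)) * ∑ j, lam t i j * m i * alpha t j i *
          (alpha t j i + beta t i j) * ‖u i t - u j t‖ ^ 2) t := by
  intro i t
  have hdpos : (0:ℝ) < d := by exact_mod_cast hd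
  have hd0 : (d:ℝ) ≠ 0 := ne_of_gt hdpos
  have hn0 : n i ≠ 0 := ne_of_gt (hn i)
  set c : ℝ := 2 / (d * n i) with hc
  -- T as a function of E and u
  have hTfun : T i = fun s => c * (E i s - (1 / 2) * ρ i * ‖u i s‖ ^ 2) := by
    funext s
    rw [hT i s, hc]
    field_simp
    ring
  -- derivative of ‖u i‖²
  have h1 : HasDerivAt (fun s => ‖u i s‖ ^ 2)
      (2 * (inner ℝ (u i t) (u' i t) : ℝ)) t := by
    have h := (hu i t).inner ℝ (hu i t)
    have : (fun s => (inner ℝ (u i s) (u i s) : ℝ)) = fun s => ‖u i s‖ ^ 2 := by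
      funext s; exact real_inner_self_eq_norm_sq (u i s)
    rw [this] at h
    refine h.congr_deriv ?_
    rw [real_inner_comm (u' i t) (u i t)]
    ring
  have hD : HasDerivAt (T i)
      (c * ((1 / ε) * ∑ j, lam t i j *
        ((1 / 2) * ρ i * ‖umix i j t‖ ^ 2 + (d / 2) * n i * Tmix i j t - E i t)
        - (1 / 2) * ρ i * (2 * (inner ℝ (u i t) (u' i t) : ℝ)))) t := by
    rw [hTfun]
    exact ((hE i t).sub (h1.const_mul ((1 / 2) * ρ i))).const_mul c
  -- momentum equation in inner-product form
  have hin : ρ i * (inner ℝ (u i t) (u' i t) : ℝ)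
      = (1 / ε) * ∑ j, ρ i * lam t i j * alpha t j i *
          (inner ℝ (u i t) (u j t - u i t) : ℝ) := by
    have h2 := congrArg (fun v => (inner ℝ (u i t) v : ℝ)) (hmom i t)
    simp only [real_inner_smul_right, inner_sum] at h2
    exact h2
  -- positivity for the mixture coefficients
  have hρpos : ∀ k, 0 < ρ k := fun k => by rw [hρ k]; exact mul_pos (hm k) (hn k)
  -- key per-species identity
  have key : ∀ j : Fin N,
      lam t i j * beta t j i * (T j t - T i t)
        + (1 / d) * (lam t i j * m i * alpha t j i *
            (alpha t j i + beta t i j) * ‖u i t - u j t‖ ^ 2)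
      = c * (lam t i j *
          ((1 / 2) * ρ i * ‖umix i j t‖ ^ 2 + (d / 2) * n i * Tmix i j t - E i t)
        - ρ i * lam t i j * alpha t j i * (inner ℝ (u i t) (u j t - u i t) : ℝ)) := by
    intro j
    have hbden : 0 < n i * lam t i j + n j * lam t j i :=
      add_pos (mul_pos (hn i) (hlam t i j)) (mul_pos (hn j) (hlam t j i))
    have haden : 0 < ρ i * lam t i j + ρ j * lam t j i :=
      add_pos (mul_pos (hρpos i) (hlam t i j)) (mul_pos (hρpos j) (hlam t j i))
    have hb : beta t i j + beta t j i = 1 := by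
      rw [hbeta t i j, hbeta t j i, add_comm (n j * lam t j i) (n i * lam t i j),
        ← add_div, div_self hbden.ne']
    have ha : alpha t i j + alpha t j i = 1 := by
      rw [halpha t i j, halpha t j i, add_comm (ρ j * lam t j i) (ρ i * lam t i j),
        ← add_div, div_self haden.ne']
    have humixn : ‖umix i j t‖ ^ 2
        = ‖u i t‖ ^ 2 + 2 * alpha t j i * (inner ℝ (u i t) (u j t - u i t) : ℝ)
          + alpha t j i ^ 2 * ‖u i t - u j t‖ ^ 2 := by
      have hrw : umix i j t = u i t + alpha t j i • (u j t - u i t) := by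
        rw [humix i j t, show alpha t i j = 1 - alpha t j i from by linarith]
        module
      rw [hrw, norm_add_sq_real, real_inner_smul_right, norm_smul]
      rw [show ‖u j t - u i t‖ = ‖u i t - u j t‖ from norm_sub_rev _ _]
      rw [Real.norm_eq_abs, mul_pow, sq_abs]
      ring
    rw [hTmix i j t, hT i t, humixn, hρ i,
      show beta t i j = 1 - beta t j i from by linarith, hc]
    field_simp
    ring
  have hsum := Finset.sum_congr rfl (fun j (_ : j ∈ Finset.univ) => key j)
  convert hD using 1
  rw [show (1:ℝ) / 2 * ρ i * (2 * (inner ℝ (u i t) (u' i t) : ℝ))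
      = ρ i * (inner ℝ (u i t) (u' i t) : ℝ) from by ring, hin]
  calc (1 / ε) * (∑ j, lam t i j * beta t j i * (T j t - T i t)) +
        (1 / (ε * d)) * ∑ j, lam t i j * m i * alpha t j i *
          (alpha t j i + beta t i j) * ‖u i t - u j t‖ ^ 2
      = (1 / ε) * ∑ j, (lam t i j * beta t j i * (T j t - T i t)
          + (1 / d) * (lam t i j * m i * alpha t j i *
              (alpha t j i + beta t i j) * ‖u i t - u j t‖ ^ 2)) := by
        rw [Finset.sum_add_distrib, ← Finset.mul_sum]
        ring
    _ = (1 / ε) * ∑ j, c * (lam t i j *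
          ((1 / 2) * ρ i * ‖umix i j t‖ ^ 2 + (d / 2) * n i * Tmix i j t - E i t)
        - ρ i * lam t i j * alpha t j i * (inner ℝ (u i t) (u j t - u i t) : ℝ)) := by
        rw [hsum]
    _ = c * ((1 / ε) * ∑ j, lam t i j *
          ((1 / 2) * ρ i * ‖umix i j t‖ ^ 2 + (d / 2) * n i * Tmix i j t - E i t)
        - (1 / ε) * ∑ j, ρ i * lam t i j * alpha t j i *
            (inner ℝ (u i t) (u j t - u i t) : ℝ)) := by
        rw [← Finset.mul_sum, Finset.sum_sub_distrib]
        ring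
end
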